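/- Fix n ≥ 1, k ≥ 1, reals ρ₁,…,ρ_{2k}, and polynomials f₁,…,f_m ∈ ℝ[x₁,…,xₙ]. Suppose a polynomial r has a PC derivation of degree d from {f₁,…,f_m} with domain polynomials dom₁,…,domₙ. Then there exist nonnegative reals a₁,…,a_m (with aᵢ = 0 whenever fᵢ has total degree greater than d), a sum of squares σ in which each square is the square of a polynomial of total degree at most d+k−1, and polynomials q₁,…,qₙ with each product qⱼ·domⱼ of total degree at most 2(d+k−1), such that ∑_{i=1}^{m} aᵢ·fᵢ² = r² + σ + ∑_{j=1}^{n} qⱼ·domⱼ. -/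

import Mathlib

open MvPolynomial

/-- The domain polynomial of the variable `xⱼ`: `∏_{i=1}^{2k} (xⱼ - ρᵢ)`. -/
noncomputable def domPoly (n k : ℕ) (ρ : Fin (2 * k) → ℝ) (j : Fin n) :
    MvPolynomial (Fin n) ℝ :=
  ∏ i, (X j - C (ρ i))

/-- A Polynomial Calculus (PC) derivation of degree `d` from the axioms `f i`
with domain polynomials `domPoly n k ρ j`: every derived polynomial has total
degree at most `d`, and the derivation rules are: an axiom `f i`; a domain
polynomial; a real linear combination of two previously derived polynomials;
or a previously derived polynomial multiplied by a variable. -/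
inductive PCDeriv {n k m : ℕ} (ρ : Fin (2 * k) → ℝ)
    (f : Fin m → MvPolynomial (Fin n) ℝ) (d : ℕ) :
    MvPolynomial (Fin n) ℝ → Prop
  | axm (i : Fin m) (h : (f i).totalDegree ≤ d) : PCDeriv ρ f d (f i)
  | dom (j : Fin n) (h : (domPoly n k ρ j).totalDegree ≤ d) :
      PCDeriv ρ f d (domPoly n k ρ j)
  | lin (a b : ℝ) (p q : MvPolynomial (Fin n) ℝ) (hp : PCDeriv ρ f d p)
      (hq : PCDeriv ρ f d q) (h : (C a * p + C b * q).totalDegree ≤ d) :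
      PCDeriv ρ f d (C a * p + C b * q)
  | mul (j : Fin n) (p : MvPolynomial (Fin n) ℝ) (hp : PCDeriv ρ f d p)
      (h : (X j * p).totalDegree ≤ d) : PCDeriv ρ f d (X j * p)

namespace Stmt11Aux

open Filter




theorem aux_tendsto_atTop (g : Polynomial ℝ) (hg : ∀ x, 0 ≤ g.eval x)
    (hdeg : 0 < g.natDegree) :
    Tendsto (fun x => g.eval x) atTop atTop := by
  have hdeg' : 0 < g.degree := Polynomial.natDegree_pos_iff_degree_pos.mp hdeg
  rcases le_or_gt 0 g.leadingCoeff with hl | hl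
  · exact g.tendsto_atTop_of_leadingCoeff_nonneg hdeg' hl
  · exfalso
    obtain ⟨x, hx⟩ := ((g.tendsto_atBot_of_leadingCoeff_nonpos hdeg' hl.le).eventually
      (eventually_le_atBot (-1))).exists
    linarith [hg x]

theorem aux_tendsto_cocompact (g : Polynomial ℝ)
    (h1 : Tendsto (fun x => g.eval x) atTop atTop)
    (h2 : Tendsto (fun x => g.eval (-x)) atTop atTop) :
    Tendsto (fun x => g.eval x) (cocompact ℝ) atTop := by
  rw [cocompact_eq_atBot_atTop, tendsto_sup]
  refine ⟨?_, h1⟩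
  have h3 : Tendsto (fun x : ℝ => -x) atBot atTop := tendsto_neg_atBot_atTop
  have := h2.comp h3
  simpa [Function.comp_def] using this

theorem aux_coc_of_nonneg (g : Polynomial ℝ) (hg : ∀ x, 0 ≤ g.eval x)
    (hdeg : 0 < g.natDegree) :
    Tendsto (fun x => g.eval x) (cocompact ℝ) atTop := by
  apply aux_tendsto_cocompact g (aux_tendsto_atTop g hg hdeg)
  have h1 : ∀ x, (g.comp (-Polynomial.X)).eval x = g.eval (-x) := fun x => by
    simp [Polynomial.eval_comp]
  have h2 : 0 < (g.comp (-Polynomial.X)).natDegree := by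
    rwa [Polynomial.natDegree_comp, Polynomial.natDegree_neg, Polynomial.natDegree_X, mul_one]
  exact Tendsto.congr h1 (aux_tendsto_atTop _ (fun x => by rw [h1]; exact hg _) h2)

theorem aux_sos_base (g : Polynomial ℝ) (h0 : g.natDegree = 0) (hg : ∀ x, 0 ≤ g.eval x) :
    ∃ (t : ℕ) (s : Fin t → Polynomial ℝ),
      (∀ i, 2 * (s i).natDegree ≤ g.natDegree) ∧ g = ∑ i, (s i) ^ 2 := by
  have hC : g = Polynomial.C (g.coeff 0) := Polynomial.eq_C_of_natDegree_eq_zero h0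
  have hc : 0 ≤ g.coeff 0 := by
    have h := hg 0
    rwa [hC, Polynomial.eval_C] at h
  refine ⟨1, fun _ => Polynomial.C (Real.sqrt (g.coeff 0)), fun i => by simp, ?_⟩
  rw [Fin.sum_univ_one, ← map_pow, Real.sq_sqrt hc]
  exact hC

theorem aux_sos (N : ℕ) : ∀ (g : Polynomial ℝ), g.natDegree ≤ N → (∀ x, 0 ≤ g.eval x) →
    ∃ (t : ℕ) (s : Fin t → Polynomial ℝ),
      (∀ i, 2 * (s i).natDegree ≤ g.natDegree) ∧ g = ∑ i, (s i) ^ 2 := by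
  induction N with
  | zero => exact fun g hN hg => aux_sos_base g (Nat.le_zero.mp hN) hg
  | succ N ih =>
    intro g hN hg
    by_cases h0 : g.natDegree = 0
    · exact aux_sos_base g h0 hg
    obtain ⟨x₀, hx₀⟩ :=
      (g.continuous).exists_forall_le (aux_coc_of_nonneg g hg (Nat.pos_of_ne_zero h0))
    set μ := g.eval x₀ with hμ
    have hμ0 : 0 ≤ μ := hg x₀
    set g' := g - Polynomial.C μ with hg'def
    have hg'ne : g' ≠ 0 := by
      intro hzero
      apply h0
      have hgc : g = Polynomial.C μ := by
        have := sub_eq_zero.mp hzero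
        exact this
      rw [hgc, Polynomial.natDegree_C]
    have hroot : g'.eval x₀ = 0 := by simp [hg'def, hμ]
    obtain ⟨h, hh⟩ := Polynomial.dvd_iff_isRoot.mpr hroot
    have hder : g'.derivative.eval x₀ = 0 := by
      have hloc : IsLocalMin (fun x => g.eval x) x₀ := Filter.Eventually.of_forall fun x => hx₀ x
      have hd0 : g.derivative.eval x₀ = 0 := by
        rw [← Polynomial.deriv]; exact hloc.deriv_eq_zero
      rw [hg'def]
      simp [hd0]
    have hhx₀ : h.eval x₀ = 0 := by
      have e : Polynomial.derivative g' =
          h + (Polynomial.X - Polynomial.C x₀) * Polynomial.derivative h := by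
        rw [hh, Polynomial.derivative_mul]
        simp only [Polynomial.derivative_sub, Polynomial.derivative_X, Polynomial.derivative_C,
          sub_zero, one_mul]
      have := congrArg (Polynomial.eval x₀) e
      rw [hder] at this
      simpa using this.symm
    obtain ⟨g₁, hg₁⟩ := Polynomial.dvd_iff_isRoot.mpr hhx₀
    have hfact : g' = (Polynomial.X - Polynomial.C x₀) ^ 2 * g₁ := by rw [hh, hg₁]; ring
    have hg₁ne : g₁ ≠ 0 := by
      rintro rfl
      rw [mul_zero] at hfact
      exact hg'ne hfact
    have hdeg' : g.natDegree = 2 + g₁.natDegree := by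
      have h1 : g'.natDegree = g.natDegree := Polynomial.natDegree_sub_C
      rw [← h1, hfact, Polynomial.natDegree_mul (pow_ne_zero _ (Polynomial.X_sub_C_ne_zero x₀))
        hg₁ne, Polynomial.natDegree_pow, Polynomial.natDegree_X_sub_C, mul_one]
    have hg₁nn : ∀ x, 0 ≤ g₁.eval x := by
      have hne : ∀ x, x ≠ x₀ → 0 ≤ g₁.eval x := by
        intro x hx
        have hfx : (x - x₀) ^ 2 * g₁.eval x = g.eval x - μ := by
          have := congrArg (Polynomial.eval x) hfact
          simp only [hg'def, Polynomial.eval_sub, Polynomial.eval_C, Polynomial.eval_mul,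
            Polynomial.eval_pow, Polynomial.eval_X] at this
          linarith [this]
        have hpos : 0 < (x - x₀) ^ 2 := pow_two_pos_of_ne_zero (sub_ne_zero.mpr hx)
        nlinarith [hx₀ x, hfx, hpos]
      intro x
      by_cases hx : x = x₀
      · subst hx
        have hcont : Tendsto (fun y => g₁.eval y) (nhdsWithin x {x}ᶜ) (nhds (g₁.eval x)) :=
          (g₁.continuous.tendsto x).mono_left nhdsWithin_le_nhds
        refine ge_of_tendsto hcont ?_
        filter_upwards [self_mem_nhdsWithin] with y hy
        exact hne y hy
      · exact hne x hx
    obtain ⟨t, s, hdegs, hsum⟩ := ih g₁ (by omega) hg₁nn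
    refine ⟨t + 1, Fin.cons (Polynomial.C (Real.sqrt μ))
      (fun i => (Polynomial.X - Polynomial.C x₀) * s i), ?_, ?_⟩
    · intro i
      refine Fin.cases ?_ ?_ i
      · simp
      · intro i
        simp only [Fin.cons_succ]
        have h1 : ((Polynomial.X - Polynomial.C x₀) * s i).natDegree ≤ 1 + (s i).natDegree :=
          le_trans (Polynomial.natDegree_mul_le) (by simp [Polynomial.natDegree_X_sub_C])
        have h2 := hdegs i
        omega
    · rw [Fin.sum_univ_succ]
      simp only [Fin.cons_zero, Fin.cons_succ]
      have hgeq : g = Polynomial.C μ + (Polynomial.X - Polynomial.C x₀) ^ 2 * g₁ := by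
        rw [← hfact, hg'def]; ring
      rw [hgeq, hsum, Finset.mul_sum]
      refine congrArg₂ (· + ·) ?_ ?_
      · rw [← map_pow, Real.sq_sqrt hμ0]
      · apply Finset.sum_congr rfl
        intro i _
        ring

theorem aux_univ (k : ℕ) (hk : 1 ≤ k) (ρ : Fin (2 * k) → ℝ) :
    ∃ (M : ℝ) (t : ℕ) (s : Fin t → Polynomial ℝ), 0 ≤ M ∧ (∀ i, (s i).natDegree ≤ k) ∧
      Polynomial.C M + Polynomial.C 2 * (∏ i, (Polynomial.X - Polynomial.C (ρ i)))
        - Polynomial.X ^ 2 = ∑ i, (s i) ^ 2 := by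
  set Q : Polynomial ℝ := ∏ i, (Polynomial.X - Polynomial.C (ρ i)) with hQdef
  have hmon : ∀ i ∈ Finset.univ, (Polynomial.X - Polynomial.C (ρ i)).Monic :=
    fun i _ => Polynomial.monic_X_sub_C (ρ i)
  have hQdeg : Q.natDegree = 2 * k := by
    rw [hQdef, Polynomial.natDegree_prod_of_monic _ _ hmon]
    simp [Polynomial.natDegree_X_sub_C]
  have hQmonic : Q.Monic := Polynomial.monic_prod_of_monic _ _ hmon
  set u : Polynomial ℝ := Polynomial.C 2 * Q - Polynomial.X ^ 2 with hudef
  have hule : u.natDegree ≤ 2 * k := by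
    apply le_trans (Polynomial.natDegree_sub_le _ _)
    apply max_le
    · rw [Polynomial.natDegree_C_mul (two_ne_zero), hQdeg]
    · rw [Polynomial.natDegree_X_pow]; omega
  have hucoeff : 0 < u.coeff (2 * k) := by
    have h1 : Q.coeff (2 * k) = 1 := by rw [← hQdeg]; exact hQmonic.coeff_natDegree
    rw [hudef, Polynomial.coeff_sub, Polynomial.coeff_C_mul, h1, Polynomial.coeff_X_pow]
    split_ifs with h
    · norm_num
    · norm_num
  have hudeg : u.natDegree = 2 * k := Polynomial.natDegree_eq_of_le_of_coeff_ne_zero hule hucoeff.ne'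
  have hulead : 0 < u.leadingCoeff := by rw [Polynomial.leadingCoeff, hudeg]; exact hucoeff
  have hdegpos : 0 < u.degree := Polynomial.natDegree_pos_iff_degree_pos.mp (by omega)
  have htop : Tendsto (fun x => u.eval x) atTop atTop :=
    u.tendsto_atTop_of_leadingCoeff_nonneg hdegpos hulead.le
  have hbot : Tendsto (fun x => u.eval (-x)) atTop atTop := by
    set v := u.comp (-Polynomial.X) with hv
    have hvdeg : v.natDegree = 2 * k := by
      rw [hv, Polynomial.natDegree_comp, Polynomial.natDegree_neg, Polynomial.natDegree_X,
        mul_one, hudeg]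
    have hvlead : 0 < v.leadingCoeff := by
      rw [hv, Polynomial.leadingCoeff_comp (by simp : (-Polynomial.X : Polynomial ℝ).natDegree ≠ 0)]
      have he : ((-Polynomial.X : Polynomial ℝ).leadingCoeff) ^ u.natDegree = 1 := by
        rw [Polynomial.leadingCoeff_neg, Polynomial.leadingCoeff_X, hudeg, pow_mul]
        norm_num
      rw [he, mul_one]
      exact hulead
    have h := v.tendsto_atTop_of_leadingCoeff_nonneg
      (Polynomial.natDegree_pos_iff_degree_pos.mp (by omega)) hvlead.le
    refine h.congr fun x => ?_
    simp [hv, Polynomial.eval_comp]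
  obtain ⟨x₀, hx₀⟩ := u.continuous.exists_forall_le (aux_tendsto_cocompact u htop hbot)
  set M := max 0 (-(u.eval x₀)) with hM
  have hM0 : 0 ≤ M := le_max_left _ _
  have hnn : ∀ x, 0 ≤ (Polynomial.C M + u).eval x := by
    intro x
    have h1 := hx₀ x
    have h2 : -(u.eval x₀) ≤ M := le_max_right _ _
    simp only [Polynomial.eval_add, Polynomial.eval_C]
    linarith
  have hdegle : (Polynomial.C M + u).natDegree ≤ 2 * k :=
    le_trans (Polynomial.natDegree_add_le _ _) (by simp [hudeg])
  obtain ⟨t, s, hs1, hs2⟩ := aux_sos ((Polynomial.C M + u).natDegree) (Polynomial.C M + u)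
    le_rfl hnn
  refine ⟨M, t, s, hM0, fun i => ?_, ?_⟩
  · have := hs1 i
    have h2 := hdegle
    omega
  · rw [← hs2, hudef]
    ring



theorem aux_totalDegree_aeval {n : ℕ} (j : Fin n) (p : Polynomial ℝ) :
    (Polynomial.aeval (X j : MvPolynomial (Fin n) ℝ) p).totalDegree ≤ p.natDegree := by
  rw [Polynomial.aeval_eq_sum_range]
  apply le_trans (totalDegree_finset_sum _ _)
  apply Finset.sup_le
  intro i hi
  apply le_trans (totalDegree_smul_le _ _)
  rw [totalDegree_X_pow]
  exact Nat.lt_succ_iff.mp (Finset.mem_range.mp hi)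

theorem aux_aeval_prod {n k : ℕ} (ρ : Fin (2 * k) → ℝ) (j : Fin n) :
    Polynomial.aeval (X j : MvPolynomial (Fin n) ℝ)
      (∏ i, (Polynomial.X - Polynomial.C (ρ i))) = domPoly n k ρ j := by
  rw [map_prod]
  unfold domPoly
  apply Finset.prod_congr rfl
  intro i _
  rw [map_sub, Polynomial.aeval_X, Polynomial.aeval_C, MvPolynomial.algebraMap_eq]

theorem aux_key {n k : ℕ} (hk : 1 ≤ k) (ρ : Fin (2 * k) → ℝ) (j : Fin n) :
    ∃ (M : ℝ) (t : ℕ) (u : Fin t → MvPolynomial (Fin n) ℝ), 0 ≤ M ∧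
      (∀ i, (u i).totalDegree ≤ k) ∧
      C M + C 2 * domPoly n k ρ j - (X j) ^ 2 = ∑ i, (u i) ^ 2 := by
  obtain ⟨M, t, s, hM, hdeg, heq⟩ := aux_univ k hk ρ
  refine ⟨M, t, fun i => Polynomial.aeval (X j) (s i), hM,
    fun i => le_trans (aux_totalDegree_aeval j _) (hdeg i), ?_⟩
  have h := congrArg (Polynomial.aeval (X j : MvPolynomial (Fin n) ℝ)) heq
  rw [map_sum, map_sub, map_add, map_mul, aux_aeval_prod ρ j, map_pow, Polynomial.aeval_X] at h
  rw [Polynomial.aeval_C, Polynomial.aeval_C, MvPolynomial.algebraMap_eq] at h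
  convert h using 2 <;> simp [map_pow]

def SOSd {n : ℕ} (D : ℕ) (g : MvPolynomial (Fin n) ℝ) : Prop :=
  ∃ (t : ℕ) (s : Fin t → MvPolynomial (Fin n) ℝ),
    (∀ i, (s i).totalDegree ≤ D) ∧ g = ∑ i, (s i) ^ 2

theorem SOSd.sq {n D : ℕ} {s : MvPolynomial (Fin n) ℝ} (h : s.totalDegree ≤ D) :
    SOSd D (s ^ 2) :=
  ⟨1, fun _ => s, fun _ => h, by rw [Fin.sum_univ_one]⟩

theorem SOSd.add {n D : ℕ} {g h : MvPolynomial (Fin n) ℝ} (hg : SOSd D g) (hh : SOSd D h) :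
    SOSd D (g + h) := by
  obtain ⟨t1, s1, hd1, rfl⟩ := hg
  obtain ⟨t2, s2, hd2, rfl⟩ := hh
  refine ⟨t1 + t2, Fin.append s1 s2, ?_, ?_⟩
  · intro i
    refine Fin.addCases (fun i => ?_) (fun i => ?_) i
    · rw [Fin.append_left]; exact hd1 i
    · rw [Fin.append_right]; exact hd2 i
  · rw [Fin.sum_univ_add]
    simp only [Fin.append_left, Fin.append_right]

theorem SOSd.cmul {n D : ℕ} {c : ℝ} {g : MvPolynomial (Fin n) ℝ} (hc : 0 ≤ c) (hg : SOSd D g) :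
    SOSd D (C c * g) := by
  obtain ⟨t, s, hd, rfl⟩ := hg
  refine ⟨t, fun i => C (Real.sqrt c) * s i, fun i => ?_, ?_⟩
  · exact le_trans (totalDegree_mul _ _) (by rw [totalDegree_C, zero_add]; exact hd i)
  · rw [Finset.mul_sum]
    apply Finset.sum_congr rfl
    intro i _
    rw [mul_pow, ← map_pow, Real.sq_sqrt hc]

theorem totalDegree_domPoly_le {n : ℕ} (k : ℕ) (ρ : Fin (2 * k) → ℝ) (j : Fin n) :
    (domPoly n k ρ j).totalDegree ≤ 2 * k := by
  unfold domPoly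
  apply le_trans (totalDegree_finset_prod _ _)
  calc ∑ i : Fin (2 * k), (X j - C (ρ i)).totalDegree ≤ ∑ _i : Fin (2 * k), 1 := by
        apply Finset.sum_le_sum
        intro i _
        rw [sub_eq_add_neg, ← map_neg]
        apply le_trans (totalDegree_add _ _)
        apply max_le
        · rw [totalDegree_X]
        · rw [totalDegree_C]; omega
    _ = 2 * k := by simp

theorem aux_deg_X_mul {n : ℕ} {p : MvPolynomial (Fin n) ℝ} (hp : p ≠ 0) (j : Fin n) :
    p.totalDegree + 1 ≤ (X j * p).totalDegree := by
  have hne : p.support.Nonempty :=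
    Finset.nonempty_iff_ne_empty.mpr (fun h => hp (support_eq_empty.mp h))
  obtain ⟨sm, hmem, hval⟩ := Finset.exists_mem_eq_sup p.support hne
    (fun m => m.sum fun _ e => e)
  have h1 : (Finsupp.single j 1 + sm) ∈ (X j * p).support := by
    rw [support_X_mul]
    exact Finset.mem_map.mpr ⟨sm, hmem, rfl⟩
  have h2 := le_totalDegree h1
  rw [Finsupp.sum_add_index' (fun _ => rfl) (fun _ _ _ => rfl),
    Finsupp.sum_single_index rfl] at h2
  have h3 : p.totalDegree = sm.sum fun _ e => e := hval
  omega

theorem pc_deg_le {n k m : ℕ} {ρ : Fin (2 * k) → ℝ} {f : Fin m → MvPolynomial (Fin n) ℝ}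
    {d : ℕ} {r : MvPolynomial (Fin n) ℝ} (h : PCDeriv ρ f d r) : r.totalDegree ≤ d := by
  cases h with
  | axm i h => exact h
  | dom j h => exact h
  | lin a b p q hp hq h => exact h
  | mul j p hp h => exact h


end Stmt11Aux

open Stmt11Aux

theorem statement11 (n k m d : ℕ) (hn : 1 ≤ n) (hk : 1 ≤ k)
    (ρ : Fin (2 * k) → ℝ) (f : Fin m → MvPolynomial (Fin n) ℝ)
    (r : MvPolynomial (Fin n) ℝ) (hr : PCDeriv ρ f d r) :
    ∃ (a : Fin m → ℝ) (t : ℕ) (s : Fin t → MvPolynomial (Fin n) ℝ)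
      (q : Fin n → MvPolynomial (Fin n) ℝ),
      (∀ i, 0 ≤ a i) ∧
      (∀ i, d < (f i).totalDegree → a i = 0) ∧
      (∀ i, (s i).totalDegree ≤ d + k - 1) ∧
      (∀ j, (q j * domPoly n k ρ j).totalDegree ≤ 2 * (d + k - 1)) ∧
      ∑ i, C (a i) * (f i) ^ 2 =
        r ^ 2 + (∑ i, (s i) ^ 2) + ∑ j, q j * domPoly n k ρ j := by
  induction hr with
  | axm i hdi =>
    refine ⟨fun i' => if i' = i then 1 else 0, 0, Fin.elim0, fun _ => 0, ?_, ?_,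
      fun i => i.elim0, ?_, ?_⟩
    · intro i'; dsimp only; split <;> norm_num
    · intro i' hgt
      dsimp only
      split
      · next heq => exact absurd hdi (by rw [← heq]; omega)
      · rfl
    · intro j; simp
    · beta_reduce
      have hterm : ∀ i' : Fin m, (C (if i' = i then (1:ℝ) else 0) * f i' ^ 2 : MvPolynomial (Fin n) ℝ)
          = if i' = i then f i' ^ 2 else 0 := by
        intro i'; split <;> simp
      rw [Finset.sum_congr rfl (fun i' _ => hterm i'),
        Finset.sum_ite_eq' Finset.univ i (fun i' => f i' ^ 2)]
      simp
  | dom j hdj =>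
    refine ⟨0, 0, Fin.elim0, fun j' => if j' = j then C (-1) * domPoly n k ρ j else 0,
      fun _ => le_rfl, fun _ _ => rfl, fun i => i.elim0, ?_, ?_⟩
    · intro j'
      dsimp only
      split
      · next h =>
          subst h
          apply le_trans (totalDegree_mul _ _)
          have h1 : (C (-1) * domPoly n k ρ j' : MvPolynomial (Fin n) ℝ).totalDegree ≤ d := by
            apply le_trans (totalDegree_mul _ _)
            rw [totalDegree_C, zero_add]
            exact hdj
          have h2 := hdj
          omega
      · simp
    · have hterm : ∀ j' : Fin n, ((if j' = j then C (-1) * domPoly n k ρ j else 0)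
          * domPoly n k ρ j' : MvPolynomial (Fin n) ℝ)
          = if j' = j then C (-1) * domPoly n k ρ j' * domPoly n k ρ j' else 0 := by
        intro j'
        split
        · next h => rw [h]
        · rw [zero_mul]
      beta_reduce
      rw [Finset.sum_congr rfl (fun j' _ => hterm j'),
        Finset.sum_ite_eq' Finset.univ j (fun j' => C (-1) * domPoly n k ρ j' * domPoly n k ρ j')]
      simp only [Finset.mem_univ, if_true, Pi.zero_apply, map_zero, zero_mul,
        Finset.sum_const_zero, Finset.univ_eq_empty, Finset.sum_empty, map_neg, map_one]
      ring
  | lin a b p q hp hq hlt ihp ihq =>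
    obtain ⟨ap, tp, sp, qp, hap0, hapz, hspdeg, hqpdeg, hpeq⟩ := ihp
    obtain ⟨aq, tq, sq, qq, haq0, haqz, hsqdeg, hqqdeg, hqeq⟩ := ihq
    have hdp : p.totalDegree ≤ d := pc_deg_le hp
    have hdq : q.totalDegree ≤ d := pc_deg_le hq
    have hdeg1 : (C a * p - C b * q : MvPolynomial (Fin n) ℝ).totalDegree ≤ d + k - 1 := by
      have hrw : (C a * p - C b * q : MvPolynomial (Fin n) ℝ) = C a * p + C (-b) * q := by
        rw [map_neg]; ring
      rw [hrw]
      apply le_trans (totalDegree_add _ _)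
      apply max_le
      · apply le_trans (totalDegree_mul _ _)
        rw [totalDegree_C, zero_add]; omega
      · apply le_trans (totalDegree_mul _ _)
        rw [totalDegree_C, zero_add]; omega
    have hS : SOSd (d + k - 1) ((C a * p - C b * q) ^ 2
        + (C (2 * a ^ 2) * (∑ i, sp i ^ 2) + C (2 * b ^ 2) * (∑ i, sq i ^ 2))) :=
      SOSd.add (SOSd.sq hdeg1) (SOSd.add (SOSd.cmul (by positivity) ⟨tp, sp, hspdeg, rfl⟩)
        (SOSd.cmul (by positivity) ⟨tq, sq, hsqdeg, rfl⟩))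
    obtain ⟨t, s, hsdeg, hseq⟩ := hS
    refine ⟨fun i => 2 * a ^ 2 * ap i + 2 * b ^ 2 * aq i, t, s,
      fun j => C (2 * a ^ 2) * qp j + C (2 * b ^ 2) * qq j, ?_, ?_, hsdeg, ?_, ?_⟩
    · intro i
      dsimp only
      have h1 := mul_nonneg (by positivity : (0:ℝ) ≤ 2 * a ^ 2) (hap0 i)
      have h2 := mul_nonneg (by positivity : (0:ℝ) ≤ 2 * b ^ 2) (haq0 i)
      linarith
    · intro i hi
      dsimp only
      rw [hapz i hi, haqz i hi]; ring
    · intro j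
      dsimp only
      have hrw : (C (2 * a ^ 2) * qp j + C (2 * b ^ 2) * qq j) * domPoly n k ρ j
          = C (2 * a ^ 2) * (qp j * domPoly n k ρ j) + C (2 * b ^ 2) * (qq j * domPoly n k ρ j) := by
        ring
      rw [hrw]
      apply le_trans (totalDegree_add _ _)
      apply max_le
      · apply le_trans (totalDegree_mul _ _)
        rw [totalDegree_C, zero_add]; exact hqpdeg j
      · apply le_trans (totalDegree_mul _ _)
        rw [totalDegree_C, zero_add]; exact hqqdeg j
    · beta_reduce
      rw [← hseq]
      have hL : ∑ i, (C (2 * a ^ 2 * ap i + 2 * b ^ 2 * aq i) * f i ^ 2 : MvPolynomial (Fin n) ℝ)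
          = C (2 * a ^ 2) * (∑ i, C (ap i) * f i ^ 2) + C (2 * b ^ 2) * (∑ i, C (aq i) * f i ^ 2) := by
        rw [Finset.mul_sum, Finset.mul_sum, ← Finset.sum_add_distrib]
        apply Finset.sum_congr rfl
        intro i _
        simp only [map_add, map_mul]
        ring
      rw [hL, hpeq, hqeq]
      have hR : ∑ j, ((C (2 * a ^ 2) * qp j + C (2 * b ^ 2) * qq j) * domPoly n k ρ j : MvPolynomial (Fin n) ℝ)
          = C (2 * a ^ 2) * (∑ j, qp j * domPoly n k ρ j)
            + C (2 * b ^ 2) * (∑ j, qq j * domPoly n k ρ j) := by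
        rw [Finset.mul_sum, Finset.mul_sum, ← Finset.sum_add_distrib]
        apply Finset.sum_congr rfl
        intro j _
        ring
      rw [hR]
      simp only [map_mul, map_pow, map_ofNat]
      ring
  | mul j p hp hXp ihp =>
    by_cases hp0 : p = 0
    · refine ⟨0, 0, Fin.elim0, 0, fun _ => le_rfl, fun _ _ => rfl, fun i => i.elim0, ?_, ?_⟩
      · intro j'; simp
      · subst hp0; simp
    · obtain ⟨ap, tp, sp, qp, hap0, hapz, hspdeg, hqpdeg, hpeq⟩ := ihp
      have hdp1 : p.totalDegree + 1 ≤ d := le_trans (aux_deg_X_mul hp0 j) hXp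
      obtain ⟨M, tu, u, hM0, hudeg, hueq⟩ := aux_key hk ρ j
      have hS : SOSd (d + k - 1) ((∑ l, u l ^ 2) * p ^ 2 + C M * (∑ i, sp i ^ 2)) := by
        apply SOSd.add
        · refine ⟨tu, fun l => u l * p, fun l => ?_, ?_⟩
          · apply le_trans (totalDegree_mul _ _)
            have := hudeg l
            omega
          · rw [Finset.sum_mul]
            apply Finset.sum_congr rfl
            intro l _
            rw [mul_pow]
        · exact SOSd.cmul hM0 ⟨tp, sp, hspdeg, rfl⟩
      obtain ⟨t, s, hsdeg, hseq⟩ := hS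
      refine ⟨fun i => M * ap i, t, s,
        fun j' => C M * qp j' + (if j' = j then C (-2) * p ^ 2 else 0),
        fun i => mul_nonneg hM0 (hap0 i),
        fun i hi => by dsimp only; rw [hapz i hi, mul_zero],
        hsdeg, ?_, ?_⟩
      · intro j'
        dsimp only
        have hsplit : ((C M * qp j' + (if j' = j then C (-2) * p ^ 2 else 0)) * domPoly n k ρ j'
            : MvPolynomial (Fin n) ℝ)
            = C M * (qp j' * domPoly n k ρ j')
              + (if j' = j then C (-2) * p ^ 2 * domPoly n k ρ j' else 0) := by
          split_ifs <;> ring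
        rw [hsplit]
        apply le_trans (totalDegree_add _ _)
        apply max_le
        · apply le_trans (totalDegree_mul _ _)
          rw [totalDegree_C, zero_add]
          exact hqpdeg j'
        · split_ifs with hj
          · apply le_trans (totalDegree_mul _ _)
            have h1 : (C (-2:ℝ) * p ^ 2 : MvPolynomial (Fin n) ℝ).totalDegree
                ≤ 2 * p.totalDegree := by
              apply le_trans (totalDegree_mul _ _)
              rw [totalDegree_C, zero_add]
              exact totalDegree_pow _ _
            have h2 := totalDegree_domPoly_le k ρ j'
            omega
          · simp
      · beta_reduce
        rw [← hseq]
        have hL : ∑ i, (C (M * ap i) * f i ^ 2 : MvPolynomial (Fin n) ℝ)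
            = C M * ∑ i, C (ap i) * f i ^ 2 := by
          rw [Finset.mul_sum]
          apply Finset.sum_congr rfl
          intro i _
          rw [map_mul]; ring
        rw [hL, hpeq]
        have hR : ∑ j', ((C M * qp j' + (if j' = j then C (-2) * p ^ 2 else 0))
              * domPoly n k ρ j' : MvPolynomial (Fin n) ℝ)
            = C M * (∑ j', qp j' * domPoly n k ρ j') + C (-2) * p ^ 2 * domPoly n k ρ j := by
          have hterm : ∀ j' ∈ Finset.univ, ((C M * qp j' + (if j' = j then C (-2) * p ^ 2 else 0))
              * domPoly n k ρ j' : MvPolynomial (Fin n) ℝ)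
              = C M * (qp j' * domPoly n k ρ j')
                + (if j' = j then C (-2) * p ^ 2 * domPoly n k ρ j' else 0) := by
            intro j' _
            split_ifs <;> ring
          rw [Finset.sum_congr rfl hterm, Finset.sum_add_distrib, ← Finset.mul_sum,
            Finset.sum_ite_eq' Finset.univ j
              (fun j' => C (-2) * p ^ 2 * domPoly n k ρ j')]
          simp
        rw [hR, ← hueq]
        have hC2 : (C (-2:ℝ) : MvPolynomial (Fin n) ℝ) = -(C 2) := by rw [map_neg]
        rw [hC2]
        ring
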